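/- Let u, v : ℝ³ → ℝ³ be in L⁴(ℝ³)³. Then ∫_{ℝ³} ⟨log(e+|u|²)|u|²u − log(e+|v|²)|v|²v, u − v⟩ dx ≥ 0. -/

import Mathlib

open Real MeasureTheory

private lemma log_term_nonneg (t : ℝ) : 0 ≤ Real.log (Real.exp 1 + t ^ 2) := by
  apply Real.log_nonneg
  nlinarith [Real.add_one_le_exp (1:ℝ), sq_nonneg t]

private lemma mono_aux (s t : ℝ) (hs : 0 ≤ s) (ht : 0 ≤ t) :
    0 ≤ (Real.log (Real.exp 1 + s ^ 2) * s ^ 2 * s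
        - Real.log (Real.exp 1 + t ^ 2) * t ^ 2 * t) * (s - t) := by
  rcases le_total t s with h | h
  · apply mul_nonneg _ (by linarith)
    have hlog : Real.log (Real.exp 1 + t ^ 2) ≤ Real.log (Real.exp 1 + s ^ 2) := by
      apply Real.log_le_log (by positivity)
      nlinarith
    have : Real.log (Real.exp 1 + t ^ 2) * t ^ 2 * t
        ≤ Real.log (Real.exp 1 + s ^ 2) * s ^ 2 * s := by
      have h1 := log_term_nonneg t
      have h2 := log_term_nonneg s
      gcongr <;> positivity
    linarith
  · rw [show (Real.log (Real.exp 1 + s ^ 2) * s ^ 2 * s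
        - Real.log (Real.exp 1 + t ^ 2) * t ^ 2 * t) * (s - t)
      = (Real.log (Real.exp 1 + t ^ 2) * t ^ 2 * t
        - Real.log (Real.exp 1 + s ^ 2) * s ^ 2 * s) * (t - s) by ring]
    apply mul_nonneg _ (by linarith)
    have hlog : Real.log (Real.exp 1 + s ^ 2) ≤ Real.log (Real.exp 1 + t ^ 2) := by
      apply Real.log_le_log (by positivity)
      nlinarith
    have : Real.log (Real.exp 1 + s ^ 2) * s ^ 2 * s
        ≤ Real.log (Real.exp 1 + t ^ 2) * t ^ 2 * t := by
      have h1 := log_term_nonneg t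
      have h2 := log_term_nonneg s
      gcongr <;> positivity
    linarith

private lemma pointwise_nonneg (a b : EuclideanSpace ℝ (Fin 3)) :
    0 ≤ (inner ℝ ((Real.log (Real.exp 1 + ‖a‖ ^ 2) * ‖a‖ ^ 2) • a
            - (Real.log (Real.exp 1 + ‖b‖ ^ 2) * ‖b‖ ^ 2) • b)
        (a - b) : ℝ) := by
  set A := Real.log (Real.exp 1 + ‖a‖ ^ 2) * ‖a‖ ^ 2 with hA
  set B := Real.log (Real.exp 1 + ‖b‖ ^ 2) * ‖b‖ ^ 2 with hB
  have hA0 : 0 ≤ A := mul_nonneg (log_term_nonneg _) (by positivity)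
  have hB0 : 0 ≤ B := mul_nonneg (log_term_nonneg _) (by positivity)
  have hab : (inner ℝ a b : ℝ) ≤ ‖a‖ * ‖b‖ := real_inner_le_norm a b
  have hexp : (inner ℝ ((A : ℝ) • a - B • b) (a - b) : ℝ)
      = A * ‖a‖ ^ 2 + B * ‖b‖ ^ 2 - (A + B) * (inner ℝ a b : ℝ) := by
    simp only [inner_sub_left, inner_sub_right, real_inner_smul_left,
      real_inner_self_eq_norm_sq, real_inner_comm b a]
    ring
  rw [hexp]
  have key := mono_aux ‖a‖ ‖b‖ (norm_nonneg a) (norm_nonneg b)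
  rw [← hA, ← hB] at key
  nlinarith [key, hab, hA0, hB0, norm_nonneg a, norm_nonneg b]

theorem damping_monotone_integral
    (u v : EuclideanSpace ℝ (Fin 3) → EuclideanSpace ℝ (Fin 3))
    (hu : MemLp u 4 volume) (hv : MemLp v 4 volume) :
    0 ≤ ∫ x : EuclideanSpace ℝ (Fin 3),
      (inner ℝ ((Real.log (Real.exp 1 + ‖u x‖ ^ 2) * ‖u x‖ ^ 2) • u x
            - (Real.log (Real.exp 1 + ‖v x‖ ^ 2) * ‖v x‖ ^ 2) • v x)
        (u x - v x) : ℝ) := by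
  exact integral_nonneg fun x => pointwise_nonneg (u x) (v x)
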